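/- Suppose f : ℝ^n × ℝ^m × ℝ^l → ℝ^n is affine, A ⊆ ℝ^n is convex, the set-valued map U satisfies: for all x₁, x₂ and λ ∈ (0,1), u₁ ∈ U(x₁) and u₂ ∈ U(x₂) imply λu₁ + (1−λ)u₂ ∈ U(λx₁ + (1−λ)x₂). Let D be a nonempty set of probability measures on ℝ^l, and let v : ℝ^n → ℝ be bounded, measurable, nonnegative, and concave on A. Define T v(x) = sup_{u ∈ U(x)} inf_{μ ∈ D} ∫ v(f(x, u, w)) dμ(w) for x ∈ A. Then T v is concave on A, provided f(x,u,w) ∈ A for all relevant (x,u,w). -/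
import Mathlib


open MeasureTheory

theorem bellman_operator_preserves_concavity
    (n m l : ℕ)
    (f : (EuclideanSpace ℝ (Fin n) × EuclideanSpace ℝ (Fin m) × EuclideanSpace ℝ (Fin l))
          →ᵃ[ℝ] EuclideanSpace ℝ (Fin n))
    (A : Set (EuclideanSpace ℝ (Fin n))) (hA : Convex ℝ A)
    (U : EuclideanSpace ℝ (Fin n) → Set (EuclideanSpace ℝ (Fin m)))
    (hUne : ∀ x, (U x).Nonempty)
    (hU : ∀ x₁ x₂ : EuclideanSpace ℝ (Fin n), ∀ lam ∈ Set.Ioo (0:ℝ) 1,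
      ∀ u₁ ∈ U x₁, ∀ u₂ ∈ U x₂,
        lam • u₁ + (1 - lam) • u₂ ∈ U (lam • x₁ + (1 - lam) • x₂))
    (D : Set (Measure (EuclideanSpace ℝ (Fin l)))) (hD : D.Nonempty)
    (hprob : ∀ μ ∈ D, IsProbabilityMeasure μ)
    (v : EuclideanSpace ℝ (Fin n) → ℝ) (M : ℝ)
    (hv_meas : Measurable v) (hv0 : ∀ x, 0 ≤ v x) (hvM : ∀ x, v x ≤ M)
    (hv_conc : ConcaveOn ℝ A v)
    (hinv : ∀ x ∈ A, ∀ u ∈ U x, ∀ w : EuclideanSpace ℝ (Fin l), f (x, u, w) ∈ A) :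
    ConcaveOn ℝ A (fun x =>
      ⨆ u : U x, ⨅ μ : D, ∫ w, v (f (x, (u : EuclideanSpace ℝ (Fin m)), w))
        ∂((μ : Measure (EuclideanSpace ℝ (Fin l))))) := by
  haveI : Nonempty D := hD.to_subtype
  haveI : ∀ x, Nonempty (U x) := fun x => (hUne x).to_subtype
  have hfc : Continuous f := f.continuous_of_finiteDimensional
  -- integrability
  have hint : ∀ x u (μ : Measure (EuclideanSpace ℝ (Fin l))), IsProbabilityMeasure μ →
      Integrable (fun w => v (f (x, u, w))) μ := by
    intro x u μ hμ
    have hm : Measurable fun w => v (f (x, u, w)) :=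
      hv_meas.comp (hfc.measurable.comp
        (measurable_const.prodMk (measurable_const.prodMk measurable_id)))
    exact (integrable_const M).mono' hm.aestronglyMeasurable
      (Filter.Eventually.of_forall fun w => by
        rw [Real.norm_eq_abs, abs_of_nonneg (hv0 _)]; exact hvM _)
  set I : EuclideanSpace ℝ (Fin n) → EuclideanSpace ℝ (Fin m) → Measure (EuclideanSpace ℝ (Fin l)) → ℝ :=
    fun x u μ => ∫ w, v (f (x, u, w)) ∂μ with hI
  have hI0 : ∀ x u μ, 0 ≤ I x u μ := fun x u μ => integral_nonneg fun w => hv0 _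
  have hIM : ∀ x u (μ : Measure (EuclideanSpace ℝ (Fin l))), IsProbabilityMeasure μ →
      I x u μ ≤ M := by
    intro x u μ hμ
    haveI := hμ
    calc I x u μ ≤ ∫ _, M ∂μ :=
          integral_mono (hint x u μ hμ) (integrable_const M) fun w => hvM _
      _ = M := by simp
  set g : EuclideanSpace ℝ (Fin n) → EuclideanSpace ℝ (Fin m) → ℝ :=
    fun x u => ⨅ μ : D, I x u μ with hg
  have hbddb : ∀ x u, BddBelow (Set.range fun μ : D => I x u (μ : Measure _)) :=
    fun x u => ⟨0, by rintro r ⟨μ, rfl⟩; exact hI0 _ _ _⟩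
  have hg0 : ∀ x u, 0 ≤ g x u := fun x u =>
    le_ciInf fun μ => hI0 _ _ _
  have hgM : ∀ x u, g x u ≤ M := by
    intro x u
    obtain ⟨μ⟩ := (inferInstance : Nonempty D)
    exact ciInf_le_of_le (hbddb x u) μ (hIM x u μ (hprob μ μ.2))
  have hbdda : ∀ x, BddAbove (Set.range fun u : U x => g x (u : EuclideanSpace ℝ (Fin m))) :=
    fun x => ⟨M, by rintro r ⟨u, rfl⟩; exact hgM _ _⟩
  refine ⟨hA, fun x₁ hx₁ x₂ hx₂ a b ha hb hab => ?_⟩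
  rcases eq_or_lt_of_le ha with rfl | hapos
  · have hb1 : b = 1 := by linarith
    subst hb1
    have h0 : (0:ℝ) • x₁ + (1:ℝ) • x₂ = x₂ := by simp
    rw [h0]; simp
  rcases eq_or_lt_of_le hb with rfl | hbpos
  · have ha1 : a = 1 := by linarith
    subst ha1
    have h0 : (1:ℝ) • x₁ + (0:ℝ) • x₂ = x₁ := by simp
    rw [h0]; simp
  have hb' : b = 1 - a := by linarith
  subst hb'
  have hmem : a ∈ Set.Ioo (0:ℝ) 1 := ⟨hapos, by linarith⟩
  set x := a • x₁ + (1 - a) • x₂ with hx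
  have hxA : x ∈ A := hA hx₁ hx₂ ha hb hab
  -- key per-control inequality
  have key : ∀ u₁ ∈ U x₁, ∀ u₂ ∈ U x₂,
      a * g x₁ u₁ + (1 - a) * g x₂ u₂ ≤ g x (a • u₁ + (1 - a) • u₂) := by
    intro u₁ hu₁ u₂ hu₂
    apply le_ciInf
    intro μ
    have hμ := hprob μ μ.2
    have hpt : ∀ w, a • v (f (x₁, u₁, w)) + (1 - a) • v (f (x₂, u₂, w)) ≤
        v (f (x, a • u₁ + (1 - a) • u₂, w)) := by
      intro w
      have hcomb : (x, a • u₁ + (1 - a) • u₂, w) =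
          a • ((x₁, u₁, w) : EuclideanSpace ℝ (Fin n) × EuclideanSpace ℝ (Fin m) ×
            EuclideanSpace ℝ (Fin l)) + (1 - a) • (x₂, u₂, w) := by
        refine Prod.ext rfl (Prod.ext rfl ?_)
        simp [Prod.smul_def, Prod.add_def]
      rw [hcomb, Convex.combo_affine_apply hab]
      exact hv_conc.2 (hinv x₁ hx₁ u₁ hu₁ w) (hinv x₂ hx₂ u₂ hu₂ w) ha hb hab
    have hmono : ∫ w, (a • v (f (x₁, u₁, w)) + (1 - a) • v (f (x₂, u₂, w))) ∂(μ : Measure _)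
        ≤ I x (a • u₁ + (1 - a) • u₂) μ :=
      integral_mono (((hint x₁ u₁ μ hμ).smul a).add ((hint x₂ u₂ μ hμ).smul (1 - a)))
        (hint x _ μ hμ) hpt
    simp only [smul_eq_mul] at hmono
    rw [integral_add ((hint x₁ u₁ μ hμ).const_mul a) ((hint x₂ u₂ μ hμ).const_mul (1 - a)),
      integral_const_mul, integral_const_mul] at hmono
    have h1 : g x₁ u₁ ≤ I x₁ u₁ μ := ciInf_le (hbddb x₁ u₁) μ
    have h2 : g x₂ u₂ ≤ I x₂ u₂ μ := ciInf_le (hbddb x₂ u₂) μ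
    have := add_le_add (mul_le_mul_of_nonneg_left h1 ha) (mul_le_mul_of_nonneg_left h2 hb)
    linarith
  -- sup over combined controls dominates
  have key2 : ∀ u₁ ∈ U x₁, ∀ u₂ ∈ U x₂,
      a * g x₁ u₁ + (1 - a) * g x₂ u₂ ≤ ⨆ u : U x, g x (u : EuclideanSpace ℝ (Fin m)) := by
    intro u₁ hu₁ u₂ hu₂
    refine (key u₁ hu₁ u₂ hu₂).trans ?_
    exact le_ciSup (hbdda x) (⟨a • u₁ + (1 - a) • u₂, hU x₁ x₂ a hmem u₁ hu₁ u₂ hu₂⟩ : U x)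
  set T := ⨆ u : U x, g x (u : EuclideanSpace ℝ (Fin m)) with hT
  set S₁ := ⨆ u : U x₁, g x₁ (u : EuclideanSpace ℝ (Fin m)) with hS₁
  set S₂ := ⨆ u : U x₂, g x₂ (u : EuclideanSpace ℝ (Fin m)) with hS₂
  show a • S₁ + (1 - a) • S₂ ≤ T
  simp only [smul_eq_mul]
  have step1 : ∀ u₂ : U x₂, a * S₁ + (1 - a) * g x₂ u₂ ≤ T := by
    intro u₂
    have : S₁ ≤ (T - (1 - a) * g x₂ u₂) / a := by
      apply ciSup_le
      intro u₁
      rw [le_div_iff₀ hapos]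
      have := key2 u₁ u₁.2 u₂ u₂.2
      linarith
    rw [le_div_iff₀ hapos] at this
    nlinarith
  have step2 : S₂ ≤ (T - a * S₁) / (1 - a) := by
    apply ciSup_le
    intro u₂
    rw [le_div_iff₀ hbpos]
    have := step1 u₂
    linarith
  rw [le_div_iff₀ hbpos] at step2
  nlinarith
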